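/- Let K be a compact subset of X, w ∈ ℝ^m, ε > 0, and let g ∈ X satisfy ‖λ(g) − w‖ ≤ ε and dist(g, K)_X ≤ ε (i.e. there is h ∈ K with ‖g − h‖_X ≤ ε). Then for every f ∈ K_w, ‖f − g‖_X ≤ ε + 2 R(K(w, 2ε))_X. -/

import Mathlib

/-- Chebyshev radius of a set `S` in a normed space `X`:
`R(S) = inf_{z ∈ X} sup_{f ∈ S} ‖f - z‖`. -/
noncomputable def chebRad {X : Type*} [NormedAddCommGroup X] (S : Set X) : ℝ :=
  ⨅ z : X, ⨆ f : S, ‖(f : X) - z‖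

/-- Weighted euclidean norm on `ℝ^m`: `‖v‖ = ( m⁻¹ ∑ v_j² )^{1/2}`. -/
noncomputable def wNorm {m : ℕ} (v : Fin m → ℝ) : ℝ :=
  Real.sqrt ((∑ j, v j ^ 2) / m)

lemma wNorm_eq_norm {m : ℕ} (v : Fin m → ℝ) :
    wNorm v = ‖((WithLp.equiv 2 (Fin m → ℝ)).symm v : EuclideanSpace ℝ (Fin m))‖ / Real.sqrt m := by
  rw [wNorm]
  rw [EuclideanSpace.norm_eq]
  simp only [WithLp.equiv_symm_apply, WithLp.ofLp_toLp, Real.norm_eq_abs, sq_abs]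
  rw [Real.sqrt_div (show (0:ℝ) ≤ ∑ j, v j ^ 2 by positivity) (m:ℝ)]

lemma wNorm_triangle {m : ℕ} (u v : Fin m → ℝ) :
    wNorm (fun j => u j + v j) ≤ wNorm u + wNorm v := by
  rw [wNorm_eq_norm, wNorm_eq_norm, wNorm_eq_norm, ← add_div]
  gcongr
  · have : (fun j => u j + v j) = u + v := rfl
    rw [this, WithLp.equiv_symm_apply, WithLp.toLp_add]
    exact norm_add_le _ _

lemma wNorm_lam_le {X : Type*} [NormedAddCommGroup X] [NormedSpace ℝ X]
    {m : ℕ} (hm : 0 < m) (lam : Fin m → X →L[ℝ] ℝ) (hlam : ∀ j, ‖lam j‖ ≤ 1)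
    (x : X) : wNorm (fun j => lam j x) ≤ ‖x‖ := by
  have hb : ∀ j, (lam j x) ^ 2 ≤ ‖x‖ ^ 2 := by
    intro j
    have h1 : |lam j x| ≤ ‖x‖ := by
      calc |lam j x| = ‖lam j x‖ := rfl
        _ ≤ ‖lam j‖ * ‖x‖ := (lam j).le_opNorm x
        _ ≤ 1 * ‖x‖ := by gcongr; exact hlam j
        _ = ‖x‖ := one_mul _
    calc (lam j x) ^ 2 = |lam j x| ^ 2 := (sq_abs _).symm
      _ ≤ ‖x‖ ^ 2 := pow_le_pow_left₀ (abs_nonneg _) h1 2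
  have : (∑ j, (lam j x) ^ 2) / m ≤ ‖x‖ ^ 2 := by
    rw [div_le_iff₀ (by positivity)]
    calc (∑ j, (lam j x) ^ 2) ≤ ∑ _j : Fin m, ‖x‖ ^ 2 := Finset.sum_le_sum fun j _ => hb j
      _ = m * ‖x‖ ^ 2 := by simp [mul_comm]
      _ = ‖x‖ ^ 2 * m := mul_comm _ _
  calc wNorm (fun j => lam j x) ≤ Real.sqrt (‖x‖ ^ 2) := Real.sqrt_le_sqrt this
    _ = ‖x‖ := Real.sqrt_sq (norm_nonneg _)


/-- Let `K ⊆ X` be compact, `w ∈ ℝ^m`, `ε > 0`, and let `g ∈ X` satisfy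
`‖λ(g) − w‖ ≤ ε` and `dist(g,K) ≤ ε` (there is `h ∈ K` with `‖g − h‖ ≤ ε`).
Then every `f ∈ K_w` satisfies `‖f − g‖ ≤ ε + 2 R(K(w,2ε))`. -/
theorem stmt_2
    {X : Type*} [NormedAddCommGroup X] [NormedSpace ℝ X] [CompleteSpace X]
    {m : ℕ} (hm : 0 < m)
    (lam : Fin m → X →L[ℝ] ℝ) (hlam : ∀ j, ‖lam j‖ ≤ 1)
    (K : Set X) (hK : IsCompact K) (w : Fin m → ℝ)
    (ε : ℝ) (hε : 0 < ε) (g : X)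
    (hg1 : wNorm (fun j => lam j g - w j) ≤ ε)
    (hg2 : ∃ h ∈ K, ‖g - h‖ ≤ ε) :
    ∀ f ∈ {f ∈ K | ∀ j, lam j f = w j},
      ‖f - g‖ ≤ ε + 2 * chebRad {f ∈ K | wNorm (fun j => lam j f - w j) ≤ 2 * ε} := by
  intro f hf
  obtain ⟨hfK, hfw⟩ := hf
  obtain ⟨h, hhK, hgh⟩ := hg2
  set S : Set X := {f ∈ K | wNorm (fun j => lam j f - w j) ≤ 2 * ε} with hS
  -- h ∈ S
  have hhS : h ∈ S := by
    refine ⟨hhK, ?_⟩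
    have tri : wNorm (fun j => lam j h - w j) ≤
        wNorm (fun j => lam j h - lam j g) + wNorm (fun j => lam j g - w j) := by
      have : (fun j => lam j h - w j)
          = fun j => (lam j h - lam j g) + (lam j g - w j) := by
        funext j; ring
      rw [this]
      exact wNorm_triangle _ _
    have h1 : wNorm (fun j => lam j h - lam j g) ≤ ε := by
      have : (fun j => lam j h - lam j g) = fun j => lam j (h - g) := by
        funext j; simp
      rw [this]
      calc wNorm (fun j => lam j (h - g)) ≤ ‖h - g‖ := wNorm_lam_le hm lam hlam _
        _ = ‖g - h‖ := norm_sub_rev _ _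
        _ ≤ ε := hgh
    linarith
  have hfS : f ∈ S := by
    refine ⟨hfK, ?_⟩
    have : (fun j => lam j f - w j) = fun _ => (0 : ℝ) := by
      funext j; rw [hfw j]; ring
    rw [this]
    simp [wNorm]
    positivity
  -- bounded K
  obtain ⟨C, hC⟩ : ∃ C, ∀ x ∈ K, ‖x‖ ≤ C := hK.isBounded.exists_norm_le
  have key : (‖f - g‖ - ε) / 2 ≤ chebRad S := by
    apply le_ciInf
    intro z
    have hbdd : BddAbove (Set.range fun x : S => ‖(x : X) - z‖) := by
      refine ⟨C + ‖z‖, ?_⟩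
      rintro r ⟨⟨x, hx⟩, rfl⟩
      calc ‖x - z‖ ≤ ‖x‖ + ‖z‖ := norm_sub_le _ _
        _ ≤ C + ‖z‖ := by gcongr; exact hC x hx.1
    have h1 : ‖f - z‖ ≤ ⨆ x : S, ‖(x : X) - z‖ := le_ciSup hbdd ⟨f, hfS⟩
    have h2 : ‖h - z‖ ≤ ⨆ x : S, ‖(x : X) - z‖ := le_ciSup hbdd ⟨h, hhS⟩
    have h3 : ‖f - g‖ ≤ ‖f - z‖ + ‖h - z‖ + ‖g - h‖ := by
      calc ‖f - g‖ = ‖(f - z) - (h - z) + (h - g)‖ := by congr 1; abel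
        _ ≤ ‖(f - z) - (h - z)‖ + ‖h - g‖ := norm_add_le _ _
        _ ≤ (‖f - z‖ + ‖h - z‖) + ‖h - g‖ := by gcongr; exact norm_sub_le _ _
        _ = ‖f - z‖ + ‖h - z‖ + ‖g - h‖ := by rw [norm_sub_rev h g]
    linarith
  have : chebRad S = chebRad S := rfl
  linarith [key]
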